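/- (Transfer of the Poincaré constant from the full domain to a subset) Let Ω_ℓ ⊆ ℝ^N be open bounded with Poincaré–Wirtinger constant σ(Ω_ℓ) > 0 (so ∫_{Ω_ℓ}(u − ū)² ≤ σ(Ω_ℓ)^{-1} ∫_{Ω_ℓ}|∇u|² for all u ∈ H¹(Ω_ℓ), ū the mean of u). Let A ⊆ Ω_ℓ have positive measure. Then for any u ∈ H¹(Ω_ℓ) with ∫_A u = 0, ∫_{Ω_ℓ} u² dx ≤ (2(1 + (|Ω_ℓ|/|A|)²)/σ(Ω_ℓ)) ∫_{Ω_ℓ} |∇u|² dx; equivalently σ(Ω_ℓ, A) ≥ σ(Ω_ℓ)/(2(1 + (|Ω_ℓ|/|A|)²)). -/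

import Mathlib

open MeasureTheory Metric

/-- Transfer of the Poincaré constant from the full domain `Ω_ℓ` to a subset `A`:
if the Poincaré–Wirtinger inequality holds on `Ω_ℓ` with constant `σ(Ω_ℓ) > 0`, and
`u ∈ H¹(Ω_ℓ)` has mean zero on `A ⊆ Ω_ℓ` with `|A| > 0`, then
`∫_{Ω_ℓ} u² ≤ (2(1 + (|Ω_ℓ|/|A|)²)/σ(Ω_ℓ)) ∫_{Ω_ℓ} |∇u|²`. -/
theorem poincare_constant_transfer {N : ℕ}
    (Ωl : Set (EuclideanSpace ℝ (Fin N)))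
    (hΩlopen : IsOpen Ωl) (hΩlbdd : Bornology.IsBounded Ωl)
    (hΩlpos : 0 < volume Ωl) (hΩlfin : volume Ωl < ⊤)
    (σ : ℝ) (hσ : 0 < σ)
    (hPoin : ∀ v : EuclideanSpace ℝ (Fin N) → ℝ,
      (∀ x ∈ Ωl, DifferentiableAt ℝ v x) →
      MemLp v 2 (volume.restrict Ωl) →
      MemLp (fun x => ‖gradient v x‖) 2 (volume.restrict Ωl) →
      ∫ x in Ωl, (v x - (volume Ωl).toReal⁻¹ * ∫ y in Ωl, v y) ^ 2 ≤
        σ⁻¹ * ∫ x in Ωl, ‖gradient v x‖ ^ 2)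
    (A : Set (EuclideanSpace ℝ (Fin N))) (hAmeas : MeasurableSet A)
    (hA : A ⊆ Ωl) (hApos : 0 < volume A)
    (u : EuclideanSpace ℝ (Fin N) → ℝ)
    (hudiff : ∀ x ∈ Ωl, DifferentiableAt ℝ u x)
    (huL2 : MemLp u 2 (volume.restrict Ωl))
    (hgradL2 : MemLp (fun x => ‖gradient u x‖) 2 (volume.restrict Ωl))
    (hmeanA : ∫ x in A, u x = 0) :
    ∫ x in Ωl, (u x) ^ 2 ≤
      (2 * (1 + ((volume Ωl).toReal / (volume A).toReal) ^ 2) / σ) *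
        ∫ x in Ωl, ‖gradient u x‖ ^ 2 := by
  set m : ℝ := (volume Ωl).toReal with hm
  set a : ℝ := (volume A).toReal with ha
  have hAfin : volume A < ⊤ := lt_of_le_of_lt (measure_mono hA) hΩlfin
  have hmpos : 0 < m := ENNReal.toReal_pos hΩlpos.ne' hΩlfin.ne
  have hapos : 0 < a := ENNReal.toReal_pos hApos.ne' hAfin.ne
  have ham : a ≤ m := ENNReal.toReal_le_toReal hAfin.ne hΩlfin.ne |>.mpr (measure_mono hA)
  set b : ℝ := m⁻¹ * ∫ y in Ωl, u y with hb
  -- finiteness instances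
  haveI : IsFiniteMeasure (volume.restrict Ωl : Measure (EuclideanSpace ℝ (Fin N))) :=
    ⟨by rwa [Measure.restrict_apply_univ]⟩
  haveI : IsFiniteMeasure (volume.restrict A : Measure (EuclideanSpace ℝ (Fin N))) :=
    ⟨by rwa [Measure.restrict_apply_univ]⟩
  have hle : (volume.restrict A : Measure (EuclideanSpace ℝ (Fin N))) ≤ volume.restrict Ωl :=
    Measure.restrict_mono hA le_rfl
  have hu1 : Integrable u (volume.restrict Ωl) := huL2.integrable one_le_two
  have hu2 : Integrable (fun x => u x ^ 2) (volume.restrict Ωl) := huL2.integrable_sq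
  have hu1A : Integrable u (volume.restrict A) := hu1.mono_measure hle
  have hu2A : Integrable (fun x => u x ^ 2) (volume.restrict A) := hu2.mono_measure hle
  -- mean on Ωl
  have hmeanΩ : ∫ x in Ωl, u x = m * b := by
    rw [hb, ← mul_assoc, mul_inv_cancel₀ hmpos.ne', one_mul]
  -- expansion on Ωl : ∫ (u-b)² = ∫ u² - m b²
  have hexpΩ : ∫ x in Ωl, (u x - b) ^ 2 = (∫ x in Ωl, u x ^ 2) - m * b ^ 2 := by
    have : ∀ x, (u x - b) ^ 2 = u x ^ 2 - 2 * b * u x + b ^ 2 := by intro x; ring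
    simp_rw [this]
    have hint1 : Integrable (fun x => u x ^ 2 - 2 * b * u x) (volume.restrict Ωl) :=
      hu2.sub (hu1.const_mul (2 * b))
    rw [integral_add hint1 (integrable_const _),
      integral_sub hu2 (hu1.const_mul (2 * b)), integral_const_mul, hmeanΩ,
      integral_const, measureReal_restrict_apply_univ, measureReal_def, ← hm, smul_eq_mul]
    ring
  -- expansion on A : ∫_A (u-b)² = ∫_A u² + a b²
  have hexpA : ∫ x in A, (u x - b) ^ 2 = (∫ x in A, u x ^ 2) + a * b ^ 2 := by
    have : ∀ x, (u x - b) ^ 2 = u x ^ 2 - 2 * b * u x + b ^ 2 := by intro x; ring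
    simp_rw [this]
    have hint1 : Integrable (fun x => u x ^ 2 - 2 * b * u x) (volume.restrict A) :=
      hu2A.sub (hu1A.const_mul (2 * b))
    rw [integral_add hint1 (integrable_const _),
      integral_sub hu2A (hu1A.const_mul (2 * b)), integral_const_mul, hmeanA,
      integral_const, measureReal_restrict_apply_univ, measureReal_def, ← ha, smul_eq_mul]
    ring
  -- w² integrable, monotone in measure
  have hwL2 : MemLp (fun x => u x - b) 2 (volume.restrict Ωl) := huL2.sub (memLp_const b)
  have hw2 : Integrable (fun x => (u x - b) ^ 2) (volume.restrict Ωl) := hwL2.integrable_sq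
  have hmono : ∫ x in A, (u x - b) ^ 2 ≤ ∫ x in Ωl, (u x - b) ^ 2 :=
    integral_mono_measure hle (Filter.Eventually.of_forall fun x => sq_nonneg _) hw2
  have hsqA : 0 ≤ ∫ x in A, u x ^ 2 :=
    integral_nonneg fun x => sq_nonneg _
  -- key bound : a b² ≤ ∫ (u-b)² over Ωl
  have hkey : a * b ^ 2 ≤ ∫ x in Ωl, (u x - b) ^ 2 := by
    have := hexpA ▸ hmono
    linarith
  -- Poincaré
  have hP := hPoin u hudiff huL2 hgradL2
  rw [← hb] at hP
  set W : ℝ := ∫ x in Ωl, (u x - b) ^ 2 with hW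
  set G : ℝ := ∫ x in Ωl, ‖gradient u x‖ ^ 2 with hG
  have hGnonneg : 0 ≤ G := integral_nonneg fun x => sq_nonneg _
  have hWnonneg : 0 ≤ W := integral_nonneg fun x => sq_nonneg _
  -- combine
  have htot : ∫ x in Ωl, u x ^ 2 = W + m * b ^ 2 := by
    rw [hW]; linarith [hexpΩ]
  rw [htot]
  have h1 : m * b ^ 2 ≤ (m / a) * W := by
    have : m * b ^ 2 = (m / a) * (a * b ^ 2) := by field_simp
    rw [this]
    exact mul_le_mul_of_nonneg_left hkey (by positivity)
  have h2 : (m / a) ≤ (m / a) ^ 2 := by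
    have hma : 1 ≤ m / a := (one_le_div hapos).mpr ham
    nlinarith
  have h3 : W + m * b ^ 2 ≤ (1 + (m / a) ^ 2) * W := by nlinarith
  calc W + m * b ^ 2 ≤ (1 + (m / a) ^ 2) * W := h3
    _ ≤ (1 + (m / a) ^ 2) * (σ⁻¹ * G) :=
        mul_le_mul_of_nonneg_left hP (by positivity)
    _ ≤ (2 * (1 + (m / a) ^ 2) / σ) * G := by
        rw [div_eq_mul_inv, div_eq_mul_inv]
        have hσinv : 0 ≤ σ⁻¹ := by positivity
        nlinarith [mul_nonneg hσinv hGnonneg, sq_nonneg (m/a)]
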